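/- arXiv:2310.05675 — 2 statements merged into one kernel-verified Lean document; each statement's English description precedes it below -/
import Mathlib

section
/- Let X = G + J where G is a continuous centered Gaussian process and J an independent compound Poisson process with intensity λ, jump mean μ₁. Suppose the G-prediction E[G_t | F^G_u] is given by a measurable functional m̂^G_t(u) of (G_s : s ≤ u). Then E[X_t | F^X_u] = m̂^G_t(u) + J_u + λ(t−u)μ₁ almost surely, for 0 ≤ u ≤ t. -/
open MeasureTheory ProbabilityTheory Real
open scoped ENNReal NNReal Nat

lemma my_poisson_hasSum (c : ℝ≥0) :
    HasSum (fun n : ℕ => (n : ℝ) * poissonPMFReal c n) c := by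
  have hexp : HasSum (fun n : ℕ => (c : ℝ) ^ n / n !) (rexp c) := by
    rw [Real.exp_eq_exp_ℝ]
    exact NormedSpace.expSeries_div_hasSum_exp (c : ℝ)
  rw [← hasSum_nat_add_iff' 1]
  have heq : (fun n : ℕ => ((n + 1 : ℕ) : ℝ) * poissonPMFReal c (n + 1)) =
      fun n : ℕ => (rexp (-(c : ℝ)) * c) * ((c : ℝ) ^ n / n !) := by
    funext n
    have h1 : ((n)! : ℝ) ≠ 0 := Nat.cast_ne_zero.mpr (Nat.factorial_ne_zero n)
    have h2 : ((n : ℝ) + 1) ≠ 0 := by positivity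
    simp only [poissonPMFReal, Nat.factorial_succ, pow_succ]
    push_cast
    field_simp
  simp only [Finset.range_one, Finset.sum_singleton, Nat.cast_zero, zero_mul, sub_zero]
  rw [heq]
  have h := hexp.mul_left (rexp (-(c : ℝ)) * c)
  rwa [show rexp (-(c : ℝ)) * c * rexp c = c by rw [Real.exp_neg]; field_simp] at h

lemma my_poisson_tsum_ennreal (c : ℝ≥0) :
    ∑' n : ℕ, (n : ℝ≥0∞) * (poissonPMF c n) = ENNReal.ofReal c := by
  have h := my_poisson_hasSum c
  have hnn : ∀ n : ℕ, 0 ≤ (n : ℝ) * poissonPMFReal c n :=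
    fun n => mul_nonneg (by positivity) poissonPMFReal_nonneg
  rw [← h.tsum_eq, ENNReal.ofReal_tsum_of_nonneg hnn h.summable]
  congr 1
  funext n
  have hpmf : poissonPMF c n = ENNReal.ofReal (poissonPMFReal c n) := rfl
  rw [hpmf, ← ENNReal.ofReal_natCast n, ← ENNReal.ofReal_mul (by positivity)]

lemma my_integrable_id_gaussianReal (m : ℝ) (v : ℝ≥0) :
    Integrable id (gaussianReal m v) := by
  by_cases hv : v = 0
  · subst hv
    rw [gaussianReal_zero_var]
    constructor
    · exact aestronglyMeasurable_id
    · rw [hasFiniteIntegral_iff_norm]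
      rw [MeasureTheory.lintegral_dirac' _ (by fun_prop)]
      exact ENNReal.ofReal_lt_top
  · rw [gaussianReal_of_var_ne_zero _ hv]
    rw [integrable_withDensity_iff (measurable_gaussianPDF m v)
      (Filter.Eventually.of_forall fun x => ENNReal.ofReal_lt_top)]
    have hv' : (0:ℝ) < (v:ℝ) := by positivity
    have hb : (0:ℝ) < (2 * (v:ℝ))⁻¹ := by positivity
    have h1 : Integrable (fun x : ℝ => (x + m) * Real.exp (-(2*(v:ℝ))⁻¹ * x ^ 2)) := by
      have := (integrable_mul_exp_neg_mul_sq hb).add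
        ((integrable_exp_neg_mul_sq hb).const_mul m)
      refine this.congr ?_
      filter_upwards with x
      simp only [Pi.add_apply]
      ring
    have h2 := h1.comp_sub_right m
    have key : (fun x : ℝ => id x * (gaussianPDF m v x).toReal) =
        fun x => (Real.sqrt (2 * π * v))⁻¹ * ((x - m + m) * Real.exp (-(2*(v:ℝ))⁻¹ * (x - m) ^ 2)) := by
      funext x
      rw [gaussianPDF, ENNReal.toReal_ofReal (gaussianPDFReal_nonneg m v x)]
      have harg : -(x - m) ^ 2 / (2 * (v:ℝ)) = -(2*(v:ℝ))⁻¹ * (x - m) ^ 2 := by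
        field_simp
      rw [gaussianPDFReal, harg]
      simp only [id]
      ring
    rw [key]
    exact h2.const_mul _

lemma my_sup_eq_generateFrom {Ω : Type*} (m₁ m₂ : MeasurableSpace Ω) :
    m₁ ⊔ m₂ = MeasurableSpace.generateFrom
      {s | ∃ A, MeasurableSet[m₁] A ∧ ∃ B, MeasurableSet[m₂] B ∧ s = A ∩ B} := by
  apply le_antisymm
  · refine sup_le (fun s hs => ?_) (fun s hs => ?_)
    · exact MeasurableSpace.measurableSet_generateFrom
        ⟨s, hs, Set.univ, MeasurableSet.univ, (Set.inter_univ s).symm⟩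
    · exact MeasurableSpace.measurableSet_generateFrom
        ⟨Set.univ, MeasurableSet.univ, s, hs, (Set.univ_inter s).symm⟩
  · refine MeasurableSpace.generateFrom_le ?_
    rintro s ⟨A, hA, B, hB, rfl⟩
    exact MeasurableSet.inter ((le_sup_left : m₁ ≤ m₁ ⊔ m₂) A hA)
      ((le_sup_right : m₂ ≤ m₁ ⊔ m₂) B hB)

lemma my_isPiSystem_inter {Ω : Type*} (m₁ m₂ : MeasurableSpace Ω) :
    IsPiSystem {s | ∃ A, MeasurableSet[m₁] A ∧ ∃ B, MeasurableSet[m₂] B ∧ s = A ∩ B} := by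
  rintro s ⟨A₁, hA₁, B₁, hB₁, rfl⟩ t ⟨A₂, hA₂, B₂, hB₂, rfl⟩ -
  exact ⟨A₁ ∩ A₂, hA₁.inter hA₂, B₁ ∩ B₂, hB₁.inter hB₂, by ext x; simp; tauto⟩

lemma my_compound_integral
    {Ω : Type*} [mΩ : MeasurableSpace Ω] (μ : Measure Ω) [IsProbabilityMeasure μ]
    (c : ℝ≥0) (Nr : Ω → ℕ) (ξ : ℕ → Ω → ℝ) (μ₁ : ℝ)
    (hNrmeas : Measurable Nr) (hξmeas : ∀ k, Measurable (ξ k))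
    (hmap : Measure.map Nr μ = (poissonPMF c).toMeasure)
    (hindep : Indep (⨆ k, MeasurableSpace.comap (ξ k) inferInstance)
        (MeasurableSpace.comap Nr inferInstance) μ)
    (hint : ∀ k, Integrable (ξ k) μ)
    (hmean : ∀ k, ∫ ω, ξ k ω ∂μ = μ₁)
    (hnorm : ∀ k, ∫⁻ ω, (‖ξ k ω‖₊ : ℝ≥0∞) ∂μ = ∫⁻ ω, (‖ξ 0 ω‖₊ : ℝ≥0∞) ∂μ) :
    Integrable (fun ω => ∑ k ∈ Finset.range (Nr ω), ξ k ω) μ ∧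
      ∫ ω, (∑ k ∈ Finset.range (Nr ω), ξ k ω) ∂μ = (c : ℝ) * μ₁ := by
  set S : ℕ → Ω → ℝ := fun n ω => ∑ k ∈ Finset.range n, ξ k ω with hSdef
  set F : Ω → ℝ := fun ω => S (Nr ω) ω with hFdef
  set A : ℕ → Set Ω := fun n => Nr ⁻¹' {n} with hAdef
  have hA : ∀ n, MeasurableSet (A n) := fun n => hNrmeas (measurableSet_singleton n)
  have hPA : ∀ n, μ (A n) = poissonPMF c n := by
    intro n
    rw [hAdef, ← Measure.map_apply hNrmeas (measurableSet_singleton n), hmap,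
      PMF.toMeasure_apply_singleton _ _ (measurableSet_singleton n)]
  have hdisj : Pairwise (Function.onFun Disjoint A) := by
    intro i j hij
    refine Set.disjoint_left.mpr fun ω hi hj => hij ?_
    simp only [hAdef, Set.mem_preimage, Set.mem_singleton_iff] at hi hj
    rw [← hi, ← hj]
  have hcover : (⋃ n, A n) = Set.univ := by
    ext ω; simp [hAdef]
  -- measurability of F
  have hK : Measurable (fun p : Ω × ℕ => S p.2 p.1) :=
    measurable_from_prod_countable_left fun n => Finset.measurable_sum (Finset.range n) fun k _ => hξmeas k
  have hFmeas : Measurable F := hK.comp (measurable_id.prodMk hNrmeas)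
  -- integrability and integral of S n
  have hSint : ∀ n, Integrable (S n) μ := fun n => integrable_finset_sum _ fun k _ => hint k
  have hSintegral : ∀ n, ∫ ω, S n ω ∂μ = (n : ℝ) * μ₁ := by
    intro n
    rw [hSdef]
    rw [integral_finset_sum _ fun k _ => hint k]
    simp [hmean, mul_comm]
  -- independence of S n and indicator of A n
  have hSmeas_sup : ∀ n, Measurable[⨆ k, MeasurableSpace.comap (ξ k) inferInstance] (S n) := fun n =>
    Finset.measurable_sum _ fun k _ =>
      (measurable_iff_comap_le.mpr (le_iSup (fun k => MeasurableSpace.comap (ξ k) inferInstance) k))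
  have hχcomap : ∀ n, Measurable[MeasurableSpace.comap Nr inferInstance]
      (fun ω => Set.indicator (A n) (fun _ => (1:ℝ)) ω) := by
    intro n
    have : (fun ω => Set.indicator (A n) (fun _ => (1:ℝ)) ω) =
        (fun m : ℕ => if m = n then (1:ℝ) else 0) ∘ Nr := by
      funext ω
      by_cases h : Nr ω = n <;> simp [hAdef, Set.indicator_apply, h]
    rw [this]
    exact (measurable_of_countable _).comp (measurable_iff_comap_le.mpr le_rfl)
  have hindepFun : ∀ n, IndepFun (S n) (fun ω => Set.indicator (A n) (fun _ => (1:ℝ)) ω) μ := by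
    intro n
    refine (IndepFun_iff_Indep _ _ _).mpr ?_
    exact indep_of_indep_of_le_left
      (indep_of_indep_of_le_right hindep (measurable_iff_comap_le.mp (hχcomap n)))
      (measurable_iff_comap_le.mp (hSmeas_sup n))
  have hχint : ∀ n, Integrable (fun ω => Set.indicator (A n) (fun _ => (1:ℝ)) ω) μ := fun n =>
    (integrable_const (1:ℝ)).indicator (hA n)
  have hsetint : ∀ n, ∫ ω in A n, S n ω ∂μ = ((n : ℝ) * μ₁) * (μ (A n)).toReal := by
    intro n
    rw [← integral_indicator (hA n)]
    have heq : (A n).indicator (S n) = fun ω => S n ω * Set.indicator (A n) (fun _ => (1:ℝ)) ω := by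
      funext ω
      by_cases hω : ω ∈ A n <;> simp [Set.indicator_apply, hω]
    rw [heq]
    have hmul := (hindepFun n).integral_mul_eq_mul_integral (hSint n).aestronglyMeasurable (hχint n).aestronglyMeasurable
    rw [show (S n * fun ω => (A n).indicator (fun _ => (1:ℝ)) ω) =
      (fun x => S n x * (A n).indicator (fun _ => (1:ℝ)) x) from rfl] at hmul
    rw [hmul, hSintegral n]
    congr 1
    rw [integral_indicator (hA n)]
    simp
    rfl
  -- integrability of F
  set C := ∫⁻ ω, (‖ξ 0 ω‖₊ : ℝ≥0∞) ∂μ with hCdef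
  have hC : C < ∞ := (hint 0).2
  have hgmeas : ∀ n, Measurable (fun ω => ∑ k ∈ Finset.range n, (‖ξ k ω‖₊ : ℝ≥0∞)) := fun n =>
    Finset.measurable_sum (Finset.range n) fun k _ => (hξmeas k).nnnorm.coe_nnreal_ennreal
  have hglint : ∀ n, ∫⁻ ω, (∑ k ∈ Finset.range n, (‖ξ k ω‖₊ : ℝ≥0∞)) ∂μ = (n : ℝ≥0∞) * C := by
    intro n
    rw [lintegral_finset_sum _ fun k _ => (hξmeas k).nnnorm.coe_nnreal_ennreal]
    simp only [hnorm]
    simp [Finset.sum_const, Finset.card_range, nsmul_eq_mul]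
  have hsetlint : ∀ n, ∫⁻ ω in A n, (∑ k ∈ Finset.range n, (‖ξ k ω‖₊ : ℝ≥0∞)) ∂μ
      = μ (A n) * ((n : ℝ≥0∞) * C) := by
    intro n
    have hψcomap : Measurable[MeasurableSpace.comap Nr inferInstance]
        (fun ω => Set.indicator (A n) (fun _ => (1:ℝ≥0∞)) ω) := by
      have : (fun ω => Set.indicator (A n) (fun _ => (1:ℝ≥0∞)) ω) =
          (fun m : ℕ => if m = n then (1:ℝ≥0∞) else 0) ∘ Nr := by
        funext ω
        by_cases h : Nr ω = n <;> simp [hAdef, Set.indicator_apply, h]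
      rw [this]
      exact (measurable_of_countable _).comp (measurable_iff_comap_le.mpr le_rfl)
    have hgsup : Measurable[⨆ k, MeasurableSpace.comap (ξ k) inferInstance]
        (fun ω => ∑ k ∈ Finset.range n, (‖ξ k ω‖₊ : ℝ≥0∞)) :=
      Finset.measurable_sum (Finset.range n) fun k _ =>
        (measurable_nnnorm.coe_nnreal_ennreal).comp (measurable_iff_comap_le.mpr
          (le_iSup (fun k => MeasurableSpace.comap (ξ k) inferInstance) k))
    have hind : IndepFun (fun ω => Set.indicator (A n) (fun _ => (1:ℝ≥0∞)) ω)
        (fun ω => ∑ k ∈ Finset.range n, (‖ξ k ω‖₊ : ℝ≥0∞)) μ := by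
      refine (IndepFun_iff_Indep _ _ _).mpr ?_
      exact indep_of_indep_of_le_left
        (indep_of_indep_of_le_right hindep.symm (measurable_iff_comap_le.mp hgsup))
        (measurable_iff_comap_le.mp hψcomap)
    have hmulrw : (fun ω => Set.indicator (A n) (fun _ => (1:ℝ≥0∞)) ω *
        ∑ k ∈ Finset.range n, (‖ξ k ω‖₊ : ℝ≥0∞)) =
        (A n).indicator (fun ω => ∑ k ∈ Finset.range n, (‖ξ k ω‖₊ : ℝ≥0∞)) := by
      funext ω
      by_cases h : ω ∈ A n <;> simp [Set.indicator_apply, h]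
    have hmul := lintegral_mul_eq_lintegral_mul_lintegral_of_indepFun
      ((measurable_const.indicator (hA n)) :
        Measurable (fun ω => Set.indicator (A n) (fun _ => (1:ℝ≥0∞)) ω))
      (hgmeas n) hind
    rw [show ((fun ω => Set.indicator (A n) (fun _ => (1:ℝ≥0∞)) ω) *
        (fun ω => ∑ k ∈ Finset.range n, (‖ξ k ω‖₊ : ℝ≥0∞))) =
        (fun ω => Set.indicator (A n) (fun _ => (1:ℝ≥0∞)) ω *
          ∑ k ∈ Finset.range n, (‖ξ k ω‖₊ : ℝ≥0∞)) from rfl] at hmul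
    rw [← lintegral_indicator (hA n) _, ← hmulrw, hmul, hglint n]
    congr 1
    simp [lintegral_indicator (hA n) _]
  have hFfin : Integrable F μ := by
    refine ⟨hFmeas.aestronglyMeasurable, ?_⟩
    show (∫⁻ ω, (‖F ω‖₊ : ℝ≥0∞) ∂μ) < ∞
    have hle : ∫⁻ ω, (‖F ω‖₊ : ℝ≥0∞) ∂μ ≤
        ∫⁻ ω, (∑ k ∈ Finset.range (Nr ω), (‖ξ k ω‖₊ : ℝ≥0∞)) ∂μ := by
      refine lintegral_mono fun ω => ?_
      calc (‖F ω‖₊ : ℝ≥0∞) ≤ ((∑ k ∈ Finset.range (Nr ω), ‖ξ k ω‖₊ : ℝ≥0) : ℝ≥0∞) := by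
            exact_mod_cast nnnorm_sum_le (Finset.range (Nr ω)) (fun k => ξ k ω)
        _ = ∑ k ∈ Finset.range (Nr ω), (‖ξ k ω‖₊ : ℝ≥0∞) := by push_cast; rfl
    have hdecomp : (fun ω => ∑ k ∈ Finset.range (Nr ω), (‖ξ k ω‖₊ : ℝ≥0∞)) =
        fun ω => ∑' n, (A n).indicator
          (fun ω' => ∑ k ∈ Finset.range n, (‖ξ k ω'‖₊ : ℝ≥0∞)) ω := by
      funext ω
      rw [tsum_eq_single (Nr ω) (fun b hb => Set.indicator_of_notMem (by
        simp only [hAdef, Set.mem_preimage, Set.mem_singleton_iff]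
        exact fun h => hb h.symm) _)]
      rw [Set.indicator_of_mem (by simp [hAdef])]
    have hsum : ∫⁻ ω, (∑ k ∈ Finset.range (Nr ω), (‖ξ k ω‖₊ : ℝ≥0∞)) ∂μ =
        ∑' n, ∫⁻ ω in A n, (∑ k ∈ Finset.range n, (‖ξ k ω‖₊ : ℝ≥0∞)) ∂μ := by
      rw [hdecomp, lintegral_tsum fun n => ((hgmeas n).indicator (hA n)).aemeasurable]
      congr 1
      funext n
      rw [lintegral_indicator (hA n) _]
    refine lt_of_le_of_lt hle ?_
    rw [hsum]
    have hbound : ∑' n, ∫⁻ ω in A n, (∑ k ∈ Finset.range n, (‖ξ k ω‖₊ : ℝ≥0∞)) ∂μ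
        = C * ∑' n : ℕ, (n : ℝ≥0∞) * μ (A n) := by
      rw [← ENNReal.tsum_mul_left]
      congr 1
      funext n
      rw [hsetlint n]
      ring
    rw [hbound]
    have hpois : ∑' n : ℕ, (n : ℝ≥0∞) * μ (A n) = ENNReal.ofReal c := by
      rw [show (fun n : ℕ => (n : ℝ≥0∞) * μ (A n)) = fun n : ℕ => (n : ℝ≥0∞) * poissonPMF c n from
        funext fun n => by rw [hPA n]]
      exact my_poisson_tsum_ennreal c
    rw [hpois]
    exact ENNReal.mul_lt_top hC ENNReal.ofReal_lt_top
  -- the integral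
  have hFset : ∀ n, ∫ ω in A n, F ω ∂μ = ((n : ℝ) * μ₁) * (μ (A n)).toReal := by
    intro n
    rw [setIntegral_congr_fun (hA n) (g := S n) (fun ω hω => by
      simp only [hAdef, Set.mem_preimage, Set.mem_singleton_iff] at hω
      simp only [hFdef, hω]), hsetint n]
  have hintegral : ∫ ω, F ω ∂μ = (c : ℝ) * μ₁ := by
    have h1 : ∫ ω, F ω ∂μ = ∫ ω in ⋃ n, A n, F ω ∂μ := by
      rw [hcover, Measure.restrict_univ]
    rw [h1, integral_iUnion hA hdisj hFfin.integrableOn]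
    have hterm : ∀ n, ∫ ω in A n, F ω ∂μ = μ₁ * ((n : ℝ) * poissonPMFReal c n) := by
      intro n
      rw [hFset n, hPA n]
      rw [show ((poissonPMF c) n).toReal = poissonPMFReal c n from by
        rw [show (poissonPMF c) n = ENNReal.ofReal (poissonPMFReal c n) from rfl,
          ENNReal.toReal_ofReal poissonPMFReal_nonneg]]
      ring
    rw [tsum_congr hterm, ((my_poisson_hasSum c).mul_left μ₁).tsum_eq]
    ring
  exact ⟨hFfin, hintegral⟩

/-- The sigma-algebra generated by a real-valued process up to time `u`. -/
noncomputable def natFilt {Ω : Type*} [MeasurableSpace Ω] (Y : ℝ → Ω → ℝ) (u : ℝ) :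
    MeasurableSpace Ω :=
  ⨆ s ∈ Set.Iic u, MeasurableSpace.comap (Y s) inferInstance
/-- For `X = G + J` with `G` a continuous centered Gaussian process and `J` an
independent compound Poisson process with intensity `lam` and jump mean `μ₁`, if
`E[G_t | F^G_u] = m̂^G_t(u)` then `E[X_t | F^X_u] = m̂^G_t(u) + J_u + lam (t-u) μ₁` a.s. -/
theorem mixed_condexp
    {Ω : Type*} [mΩ : MeasurableSpace Ω] (μ : Measure Ω) [IsProbabilityMeasure μ]
    (lam μ₁ : ℝ) (hlam : 0 < lam)
    (G : ℝ → Ω → ℝ) (N : ℝ → Ω → ℕ) (ξ : ℕ → Ω → ℝ) (J X : ℝ → Ω → ℝ)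
    (hGmeas : ∀ t, Measurable (G t)) (hNmeas : ∀ t, Measurable (N t))
    (hξmeas : ∀ k, Measurable (ξ k))
    -- `G` is a continuous centered Gaussian process
    (hGcont : ∀ ω, Continuous fun t => G t ω)
    (hGauss : ∀ (n : ℕ) (c : Fin n → ℝ) (ts : Fin n → ℝ), ∃ σ2 : NNReal,
      Measure.map (fun ω => ∑ i, c i * G (ts i) ω) μ = gaussianReal 0 σ2)
    -- `J` is a compound Poisson process with intensity `lam`
    (hJ : ∀ t ω, J t ω = ∑ k ∈ Finset.range (N t ω), ξ k ω)
    (hN0 : ∀ ω, N 0 ω = 0)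
    (hNpois : ∀ s t : ℝ, 0 ≤ s → s ≤ t →
      Measure.map (fun ω => N t ω - N s ω) μ =
        (poissonPMF ((lam * (t - s)).toNNReal)).toMeasure)
    -- i.i.d. square-integrable jumps with mean `μ₁`, independent of `N`
    (hiid : iIndepFun ξ μ)
    (hident : ∀ k, Measure.map (ξ k) μ = Measure.map (ξ 0) μ)
    (hξN : Indep (⨆ k, MeasurableSpace.comap (ξ k) inferInstance)
        (⨆ t, MeasurableSpace.comap (N t) inferInstance) μ)
    (hsq : Integrable (fun ω => (ξ 0 ω) ^ 2) μ)
    (hmean : ∫ ω, ξ 0 ω ∂μ = μ₁)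
    -- `J` is independent of `G`
    (hGJ : Indep (⨆ t, MeasurableSpace.comap (G t) inferInstance)
        (⨆ t, MeasurableSpace.comap (J t) inferInstance) μ)
    -- increments of `J` are stationary and independent of the joint past
    (hincr : ∀ u t : ℝ, 0 ≤ u → u ≤ t →
      Indep (MeasurableSpace.comap (fun ω => J t ω - J u ω) inferInstance)
        (natFilt G u ⊔ natFilt J u) μ)
    (hstat : ∀ u t : ℝ, 0 ≤ u → u ≤ t →
      Measure.map (fun ω => J t ω - J u ω) μ = Measure.map (J (t - u)) μ)
    -- `X = G + J`; by continuity of `G`, `F^X = F^{G,J}`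
    (hX : ∀ t ω, X t ω = G t ω + J t ω)
    (hfilt : ∀ u : ℝ, natFilt X u = natFilt G u ⊔ natFilt J u)
    -- the `G`-prediction is given by an `F^G_u`-measurable functional `m̂^G_t(u)`
    (u t : ℝ) (hu : 0 ≤ u) (hut : u ≤ t)
    (mhat : Ω → ℝ)
    (hmhat_meas : Measurable[natFilt G u] mhat)
    (hmhat : μ[G t | natFilt G u] =ᵐ[μ] mhat) :
    μ[X t | natFilt X u] =ᵐ[μ] fun ω => mhat ω + J u ω + lam * (t - u) * μ₁ := by
  -- measurability of J and X
  have hJmeas : ∀ r, Measurable (J r) := by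
    intro r
    have hK : Measurable (fun p : Ω × ℕ => ∑ k ∈ Finset.range p.2, ξ k p.1) :=
      measurable_from_prod_countable_left fun n =>
        Finset.measurable_sum (Finset.range n) fun k _ => hξmeas k
    have hJr : J r = fun ω => (fun p : Ω × ℕ => ∑ k ∈ Finset.range p.2, ξ k p.1) (ω, N r ω) := by
      funext ω; simp [hJ]
    rw [hJr]
    exact hK.comp (measurable_id.prodMk (hNmeas r))
  -- σ-algebra bounds
  have hnat_le : ∀ (Y : ℝ → Ω → ℝ), (∀ s, Measurable (Y s)) → natFilt Y u ≤ mΩ := by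
    intro Y hY
    exact iSup₂_le fun s _ => measurable_iff_comap_le.mp (hY s)
  have hmG_le : natFilt G u ≤ mΩ := hnat_le G hGmeas
  have hmJ_le : natFilt J u ≤ mΩ := hnat_le J hJmeas
  have hm_le : natFilt G u ⊔ natFilt J u ≤ mΩ := sup_le hmG_le hmJ_le
  have hmG_sup : natFilt G u ≤ ⨆ s, MeasurableSpace.comap (G s) inferInstance :=
    iSup₂_le fun s _ => le_iSup (fun s => MeasurableSpace.comap (G s) inferInstance) s
  have hmJ_sup : natFilt J u ≤ ⨆ s, MeasurableSpace.comap (J s) inferInstance :=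
    iSup₂_le fun s _ => le_iSup (fun s => MeasurableSpace.comap (J s) inferInstance) s
  -- integrability and mean of the jumps
  have hξ0_int : Integrable (ξ 0) μ := by
    refine (hsq.add (integrable_const 1)).mono' (hξmeas 0).aestronglyMeasurable ?_
    filter_upwards with ω
    simp only [Pi.add_apply]
    rw [Real.norm_eq_abs]
    nlinarith [sq_abs (ξ 0 ω), abs_nonneg (ξ 0 ω), sq_nonneg (|ξ 0 ω| - 1)]
  have hξint : ∀ k, Integrable (ξ k) μ := by
    intro k
    have h0 : Integrable id (Measure.map (ξ 0) μ) :=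
      (integrable_map_measure aestronglyMeasurable_id (hξmeas 0).aemeasurable).mpr hξ0_int
    have hk : Integrable id (Measure.map (ξ k) μ) := by rw [hident k]; exact h0
    exact (integrable_map_measure aestronglyMeasurable_id (hξmeas k).aemeasurable).mp hk
  have hξmean : ∀ k, ∫ ω, ξ k ω ∂μ = μ₁ := by
    intro k
    calc ∫ ω, ξ k ω ∂μ = ∫ x, id x ∂(Measure.map (ξ k) μ) :=
          (integral_map (hξmeas k).aemeasurable aestronglyMeasurable_id).symm
      _ = ∫ x, id x ∂(Measure.map (ξ 0) μ) := by rw [hident k]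
      _ = ∫ ω, ξ 0 ω ∂μ := integral_map (hξmeas 0).aemeasurable aestronglyMeasurable_id
      _ = μ₁ := hmean
  have hξnorm : ∀ k, ∫⁻ ω, (‖ξ k ω‖₊ : ℝ≥0∞) ∂μ = ∫⁻ ω, (‖ξ 0 ω‖₊ : ℝ≥0∞) ∂μ := by
    intro k
    calc ∫⁻ ω, (‖ξ k ω‖₊ : ℝ≥0∞) ∂μ
        = ∫⁻ x, (‖x‖₊ : ℝ≥0∞) ∂(Measure.map (ξ k) μ) :=
          (lintegral_map measurable_nnnorm.coe_nnreal_ennreal (hξmeas k)).symm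
      _ = ∫⁻ x, (‖x‖₊ : ℝ≥0∞) ∂(Measure.map (ξ 0) μ) := by rw [hident k]
      _ = ∫⁻ ω, (‖ξ 0 ω‖₊ : ℝ≥0∞) ∂μ :=
          lintegral_map measurable_nnnorm.coe_nnreal_ennreal (hξmeas 0)
  -- compound Poisson facts
  have hJr : ∀ r : ℝ, 0 ≤ r → Integrable (J r) μ ∧ ∫ ω, J r ω ∂μ = lam * r * μ₁ := by
    intro r hr
    have hNr : Measure.map (N r) μ = (poissonPMF ((lam * r).toNNReal)).toMeasure := by
      have h := hNpois 0 r le_rfl hr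
      have heq : (fun ω => N r ω - N 0 ω) = N r := by
        funext ω; rw [hN0 ω]; exact Nat.sub_zero _
      rw [heq] at h
      simpa using h
    have hindep' : Indep (⨆ k, MeasurableSpace.comap (ξ k) inferInstance)
        (MeasurableSpace.comap (N r) inferInstance) μ :=
      indep_of_indep_of_le_right hξN (le_iSup (fun s => MeasurableSpace.comap (N s) inferInstance) r)
    have hc := my_compound_integral μ ((lam * r).toNNReal) (N r) ξ μ₁ (hNmeas r) hξmeas hNr
      hindep' hξint hξmean hξnorm
    have hJr_eq : J r = fun ω => ∑ k ∈ Finset.range (N r ω), ξ k ω := funext fun ω => hJ r ω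
    rw [hJr_eq]
    refine ⟨hc.1, ?_⟩
    rw [hc.2, Real.coe_toNNReal _ (mul_nonneg hlam.le hr)]
  have hJu_int : Integrable (J u) μ := (hJr u hu).1
  -- the increment
  have hf_meas : Measurable (fun ω => J t ω - J u ω) := (hJmeas t).sub (hJmeas u)
  have htu : (0:ℝ) ≤ t - u := sub_nonneg.mpr hut
  have hmapf : Measure.map (fun ω => J t ω - J u ω) μ = Measure.map (J (t-u)) μ :=
    hstat u t hu hut
  have hf_int : Integrable (fun ω => J t ω - J u ω) μ := by
    have h0 : Integrable id (Measure.map (J (t-u)) μ) :=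
      (integrable_map_measure aestronglyMeasurable_id (hJmeas (t-u)).aemeasurable).mpr (hJr _ htu).1
    rw [← hmapf] at h0
    exact (integrable_map_measure aestronglyMeasurable_id hf_meas.aemeasurable).mp h0
  have hf_mean : ∫ ω, (J t ω - J u ω) ∂μ = lam * (t - u) * μ₁ := by
    calc ∫ ω, (J t ω - J u ω) ∂μ
        = ∫ x, id x ∂(Measure.map (fun ω => J t ω - J u ω) μ) :=
          (integral_map hf_meas.aemeasurable aestronglyMeasurable_id).symm
      _ = ∫ x, id x ∂(Measure.map (J (t-u)) μ) := by rw [hmapf]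
      _ = ∫ ω, J (t-u) ω ∂μ := integral_map (hJmeas (t-u)).aemeasurable aestronglyMeasurable_id
      _ = lam * (t-u) * μ₁ := (hJr _ htu).2
  -- integrability of G t
  have hGt_int : Integrable (G t) μ := by
    obtain ⟨σ2, hσ⟩ := hGauss 1 (fun _ => 1) (fun _ => t)
    have heq : (fun ω => ∑ i : Fin 1, (1:ℝ) * G t ω) = G t := by
      funext ω; simp
    rw [heq] at hσ
    have h0 : Integrable id (Measure.map (G t) μ) := by
      rw [hσ]; exact my_integrable_id_gaussianReal 0 σ2
    exact (integrable_map_measure aestronglyMeasurable_id (hGmeas t).aemeasurable).mp h0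
  have hmhat_int : Integrable mhat μ := integrable_condExp.congr hmhat
  -- mhat is a version of the conditional expectation of G t given the join
  have key : ∀ s : Set Ω, MeasurableSet[natFilt G u ⊔ natFilt J u] s →
      ∫ x in s, mhat x ∂μ = ∫ x in s, G t x ∂μ := by
    have htot : ∫ x, mhat x ∂μ = ∫ x, G t x ∂μ := by
      rw [integral_congr_ae hmhat.symm, integral_condExp hmG_le]
    have hbasic : ∀ s ∈ {s | ∃ A, MeasurableSet[natFilt G u] A ∧
        ∃ B, MeasurableSet[natFilt J u] B ∧ s = A ∩ B},
        ∫ x in s, mhat x ∂μ = ∫ x in s, G t x ∂μ := by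
      rintro s ⟨A, hA, B, hB, rfl⟩
      have hAm : MeasurableSet A := hmG_le A hA
      have hBm : MeasurableSet B := hmJ_le B hB
      have hBind_meas : Measurable[natFilt J u] (B.indicator (fun _ => (1:ℝ))) :=
        measurable_const.indicator hB
      have hind1 : IndepFun (A.indicator (G t)) (B.indicator (fun _ => (1:ℝ))) μ := by
        refine (IndepFun_iff_Indep _ _ _).mpr ?_
        refine indep_of_indep_of_le_left (indep_of_indep_of_le_right hGJ
          (le_trans (measurable_iff_comap_le.mp hBind_meas) hmJ_sup)) ?_
        have hGtM : Measurable[MeasurableSpace.comap (G t) inferInstance ⊔ natFilt G u] (G t) :=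
          measurable_iff_comap_le.mpr le_sup_left
        have hAM : MeasurableSet[MeasurableSpace.comap (G t) inferInstance ⊔ natFilt G u] A :=
          (le_sup_right : natFilt G u ≤ _) A hA
        exact le_trans (measurable_iff_comap_le.mp (hGtM.indicator hAM))
          (sup_le (le_iSup (fun s => MeasurableSpace.comap (G s) inferInstance) t) hmG_sup)
      have hind2 : IndepFun (A.indicator mhat) (B.indicator (fun _ => (1:ℝ))) μ := by
        refine (IndepFun_iff_Indep _ _ _).mpr ?_
        refine indep_of_indep_of_le_left (indep_of_indep_of_le_right hGJ
          (le_trans (measurable_iff_comap_le.mp hBind_meas) hmJ_sup)) ?_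
        exact le_trans (measurable_iff_comap_le.mp (hmhat_meas.indicator hA)) hmG_sup
      have hsplit : ∀ (g : Ω → ℝ), (A ∩ B).indicator g =
          fun ω => A.indicator g ω * B.indicator (fun _ => (1:ℝ)) ω := by
        intro g
        funext ω
        by_cases h1 : ω ∈ A <;> by_cases h2 : ω ∈ B <;>
          simp [Set.indicator_apply, h1, h2]
      have hprod : ∀ (g : Ω → ℝ), Integrable g μ →
          IndepFun (A.indicator g) (B.indicator (fun _ => (1:ℝ))) μ →
          ∫ x in A ∩ B, g x ∂μ = (∫ x in A, g x ∂μ) * (μ B).toReal := by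
        intro g hg hind
        rw [← integral_indicator (hAm.inter hBm), hsplit g]
        have hmul := IndepFun.integral_mul_eq_mul_integral hind (hg.indicator hAm).aestronglyMeasurable
          ((integrable_const (1:ℝ)).indicator hBm).aestronglyMeasurable
        rw [show (A.indicator g * B.indicator fun _ => (1:ℝ)) =
          fun ω => A.indicator g ω * B.indicator (fun _ => (1:ℝ)) ω from rfl] at hmul
        rw [hmul, integral_indicator hAm]
        congr 1
        rw [integral_indicator hBm]
        simp
        rfl
      have hAeq : ∫ x in A, mhat x ∂μ = ∫ x in A, G t x ∂μ := by
        calc ∫ x in A, mhat x ∂μ = ∫ x in A, (μ[G t|natFilt G u]) x ∂μ :=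
              integral_congr_ae (ae_restrict_of_ae hmhat.symm)
          _ = ∫ x in A, G t x ∂μ := setIntegral_condExp hmG_le hGt_int hA
      rw [hprod mhat hmhat_int hind2, hprod (G t) hGt_int hind1, hAeq]
    have hempty : ∫ x in (∅ : Set Ω), mhat x ∂μ = ∫ x in (∅ : Set Ω), G t x ∂μ := by simp
    have hcompl : ∀ s : Set Ω, MeasurableSet[natFilt G u ⊔ natFilt J u] s →
        (∫ x in s, mhat x ∂μ = ∫ x in s, G t x ∂μ) →
        ∫ x in sᶜ, mhat x ∂μ = ∫ x in sᶜ, G t x ∂μ := by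
      intro s hs hC
      have h1 := integral_add_compl (hm_le s hs) hmhat_int
      have h2 := integral_add_compl (hm_le s hs) hGt_int
      linarith
    have hunion : ∀ g : ℕ → Set Ω, Pairwise (Function.onFun Disjoint g) →
        (∀ i, MeasurableSet[natFilt G u ⊔ natFilt J u] (g i)) →
        (∀ i, ∫ x in g i, mhat x ∂μ = ∫ x in g i, G t x ∂μ) →
        ∫ x in ⋃ i, g i, mhat x ∂μ = ∫ x in ⋃ i, g i, G t x ∂μ := by
      intro g hd hgm hC
      rw [integral_iUnion (fun i => hm_le _ (hgm i)) hd hmhat_int.integrableOn,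
        integral_iUnion (fun i => hm_le _ (hgm i)) hd hGt_int.integrableOn]
      exact tsum_congr hC
    exact fun s hs => MeasurableSpace.induction_on_inter (m := natFilt G u ⊔ natFilt J u)
      (C := fun s _ => ∫ x in s, mhat x ∂μ = ∫ x in s, G t x ∂μ)
      (my_sup_eq_generateFrom _ _) (my_isPiSystem_inter _ _)
      hempty hbasic hcompl hunion s hs
  have hB1 : mhat =ᵐ[μ] μ[G t | natFilt G u ⊔ natFilt J u] := by
    refine ae_eq_condExp_of_forall_setIntegral_eq hm_le hGt_int
      (fun s _ _ => hmhat_int.integrableOn) (fun s hs _ => key s hs) ?_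
    exact StronglyMeasurable.aestronglyMeasurable (Measurable.stronglyMeasurable (hmhat_meas.mono le_sup_left le_rfl))
  -- conditional expectation of J u
  have hJu_meas_m : Measurable[natFilt G u ⊔ natFilt J u] (J u) :=
    measurable_iff_comap_le.mpr (le_trans
      (le_iSup₂ (f := fun s (_ : s ∈ Set.Iic u) => MeasurableSpace.comap (J s) inferInstance)
        u (Set.mem_Iic.mpr le_rfl)) le_sup_right)
  have hB2 : μ[J u | natFilt G u ⊔ natFilt J u] =ᵐ[μ] J u :=
    Filter.EventuallyEq.of_eq
      (condExp_of_stronglyMeasurable hm_le hJu_meas_m.stronglyMeasurable hJu_int)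
  -- conditional expectation of the increment
  have hB3 : μ[(fun ω => J t ω - J u ω) | natFilt G u ⊔ natFilt J u] =ᵐ[μ]
      fun _ => ∫ ω, (J t ω - J u ω) ∂μ := by
    exact condExp_indep_eq (measurable_iff_comap_le.mp hf_meas) hm_le
      ((Measurable.stronglyMeasurable (measurable_iff_comap_le.mpr le_rfl)))
      (hincr u t hu hut)
  -- assemble
  have hXt : X t = G t + (J u + fun ω => J t ω - J u ω) := by
    funext ω
    simp only [Pi.add_apply, hX t ω]
    ring
  have h1 := condExp_add (μ := μ) (m := natFilt G u ⊔ natFilt J u) hGt_int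
    (hJu_int.add hf_int)
  have h2 := condExp_add (μ := μ) (m := natFilt G u ⊔ natFilt J u) hJu_int hf_int
  rw [hfilt u, hXt]
  filter_upwards [h1, h2, hB1, hB2, hB3] with ω e1 e2 e3 e4 e5
  rw [e1]
  simp only [Pi.add_apply]
  rw [e2]
  simp only [Pi.add_apply]
  rw [e4, e5, hf_mean, ← e3]
  ring
end

section
/- For the fBm prediction kernel Ψ_H(t,s|u) = (sin(π(H−1/2))/π) s^{1/2−H}(u−s)^{1/2−H} ∫_u^t z^{H−1/2}(z−u)^{H−1/2}/(z−s) dz with 0 < s < u < t and H ∈ (1/2, 1), the integral defining Ψ_H(t,s|u) is finite, and s ↦ Ψ_H(t,s|u) belongs to L²([0,u]). -/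
open MeasureTheory Real

/-- The fBm prediction kernel
`Ψ_H(t,s|u) = (sin(π(H-1/2))/π) s^{1/2-H} (u-s)^{1/2-H}
  ∫_u^t z^{H-1/2} (z-u)^{H-1/2} / (z-s) dz`. -/
noncomputable def PsiH (H t u s : ℝ) : ℝ :=
  (Real.sin (π * (H - 1 / 2)) / π) * s ^ (1 / 2 - H) * (u - s) ^ (1 / 2 - H) *
    ∫ z in Set.Ioc u t, z ^ (H - 1 / 2) * (z - u) ^ (H - 1 / 2) / (z - s)

/-- Beta-type integrability: `s ↦ s^b (u-s)^b` is integrable on `(0,u]` for `-1 < b < 0`. -/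
lemma beta_type_integrable {b u : ℝ} (hb1 : -1 < b) (hb0 : b < 0) (hu : 0 < u) :
    IntegrableOn (fun s => s ^ b * (u - s) ^ b) (Set.Ioc 0 u) volume := by
  have hmeas : Measurable fun s : ℝ => s ^ b * (u - s) ^ b :=
    (measurable_id.pow_const b).mul ((measurable_const.sub measurable_id).pow_const b)
  have hsplit : Set.Ioc (0:ℝ) u = Set.Ioc 0 (u/2) ∪ Set.Ioc (u/2) u :=
    (Set.Ioc_union_Ioc_eq_Ioc (by linarith) (by linarith)).symm
  rw [hsplit]
  apply IntegrableOn.union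
  · -- on (0, u/2]: bound (u-s)^b by (u/2)^b
    have hint : IntegrableOn (fun s : ℝ => s ^ b * (u/2) ^ b) (Set.Ioc 0 (u/2)) volume :=
      (intervalIntegral.intervalIntegrable_rpow' hb1 (a := 0) (b := u/2)).1.mul_const _
    refine Integrable.mono hint hmeas.aestronglyMeasurable ?_
    rw [ae_restrict_iff' measurableSet_Ioc]
    filter_upwards with s hs
    rcases hs with ⟨hs0, hs2⟩
    have hs0' : (0:ℝ) ≤ s ^ b := Real.rpow_nonneg hs0.le b
    have h1 : (u - s) ^ b ≤ (u/2) ^ b :=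
      Real.rpow_le_rpow_of_nonpos (by linarith) (by linarith) hb0.le
    have h2 : (0:ℝ) ≤ (u - s) ^ b := Real.rpow_nonneg (by linarith) b
    rw [Real.norm_eq_abs, Real.norm_eq_abs, abs_of_nonneg (mul_nonneg hs0' h2)]
    calc s ^ b * (u - s) ^ b ≤ s ^ b * (u/2) ^ b := by
          exact mul_le_mul_of_nonneg_left h1 hs0'
      _ ≤ |s ^ b * (u/2) ^ b| := le_abs_self _
  · -- on (u/2, u]: bound s^b by (u/2)^b
    have hint : IntegrableOn (fun s : ℝ => (u/2) ^ b * (u - s) ^ b) (Set.Ioc (u/2) u) volume := by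
      have h0 : IntervalIntegrable (fun x : ℝ => x ^ b) volume 0 (u/2) :=
        intervalIntegral.intervalIntegrable_rpow' hb1
      have h1 : IntervalIntegrable (fun x : ℝ => (u - x) ^ b) volume (u - 0) (u - u/2) :=
        h0.comp_sub_left u
      rw [sub_zero, show u - u/2 = u/2 by ring] at h1
      have h2 : IntegrableOn (fun x : ℝ => (u - x) ^ b) (Set.Ioc (u/2) u) volume := h1.2
      exact h2.const_mul _
    refine Integrable.mono hint hmeas.aestronglyMeasurable ?_
    rw [ae_restrict_iff' measurableSet_Ioc]
    filter_upwards with s hs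
    rcases hs with ⟨hs2, hsu⟩
    have hs0 : (0:ℝ) < s := lt_trans (by linarith) hs2
    have hus : (0:ℝ) ≤ u - s := by linarith
    have h1 : s ^ b ≤ (u/2) ^ b :=
      Real.rpow_le_rpow_of_nonpos (by linarith) hs2.le hb0.le
    have h2 : (0:ℝ) ≤ (u - s) ^ b := Real.rpow_nonneg hus b
    rw [Real.norm_eq_abs, Real.norm_eq_abs,
      abs_of_nonneg (mul_nonneg (Real.rpow_nonneg hs0.le b) h2)]
    calc s ^ b * (u - s) ^ b ≤ (u/2) ^ b * (u - s) ^ b := by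
          exact mul_le_mul_of_nonneg_right h1 h2
      _ ≤ |(u/2) ^ b * (u - s) ^ b| := le_abs_self _

/-- for `H ∈ (1/2, 1)` and `0 < u < t`, the integral defining the fBm
prediction kernel `Ψ_H(t,s|u)` is finite for each `s ∈ (0,u)`, and `s ↦ Ψ_H(t,s|u)`
belongs to `L²([0,u])`. -/
theorem fbm_prediction_kernel_L2
    (H : ℝ) (hH : H ∈ Set.Ioo (1 / 2 : ℝ) 1)
    (u t T : ℝ) (hu : 0 < u) (hut : u < t) (htT : t ≤ T) :
    (∀ s ∈ Set.Ioo (0 : ℝ) u,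
      IntegrableOn (fun z => z ^ (H - 1 / 2) * (z - u) ^ (H - 1 / 2) / (z - s))
        (Set.Ioc u t) volume)
    ∧ MemLp (fun s => PsiH H t u s) 2 (volume.restrict (Set.Ioc 0 u)) := by
  obtain ⟨hH1, hH2⟩ := hH
  set e : ℝ := H - 1/2 with he
  have he0 : 0 < e := by simp only [he]; linarith
  have he1 : e < 1/2 := by simp only [he]; linarith
  -- Part 1: integrability of the inner integrand for each s < u
  have part1 : ∀ s : ℝ, s < u →
      IntegrableOn (fun z => z ^ e * (z - u) ^ e / (z - s)) (Set.Ioc u t) volume := by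
    intro s hs
    have hcont : ContinuousOn (fun z => z ^ e * (z - u) ^ e / (z - s)) (Set.Icc u t) := by
      apply ContinuousOn.div
      · apply ContinuousOn.mul
        · exact continuousOn_id.rpow_const fun z hz => Or.inl (ne_of_gt (lt_of_lt_of_le hu hz.1))
        · exact (continuousOn_id.sub continuousOn_const).rpow_const fun z hz => Or.inr he0.le
      · exact continuousOn_id.sub continuousOn_const
      · intro z hz
        have : s < z := lt_of_lt_of_le hs hz.1
        exact sub_ne_zero.mpr (ne_of_gt this)
    exact (hcont.integrableOn_compact isCompact_Icc).mono_set Set.Ioc_subset_Icc_self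
  refine ⟨fun s hs => part1 s hs.2, ?_⟩
  -- the parametric integral
  set F : ℝ → ℝ := fun s => ∫ z in Set.Ioc u t, z ^ e * (z - u) ^ e / (z - s) with hF
  -- measurability of F
  have hFmeas : StronglyMeasurable F := by
    have hunc : StronglyMeasurable (fun p : ℝ × ℝ => p.2 ^ e * (p.2 - u) ^ e / (p.2 - p.1)) := by
      apply Measurable.stronglyMeasurable
      exact ((measurable_snd.pow_const e).mul
        ((measurable_snd.sub measurable_const).pow_const e)).div (measurable_snd.sub measurable_fst)
    exact hunc.integral_prod_right'
  -- measurability of PsiH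
  have hPsimeas : AEStronglyMeasurable (fun s => PsiH H t u s)
      (volume.restrict (Set.Ioc 0 u)) := by
    have hpre : Measurable fun s : ℝ =>
        (Real.sin (π * (H - 1 / 2)) / π) * s ^ (1/2 - H) * (u - s) ^ (1/2 - H) :=
      ((measurable_const.mul (measurable_id.pow_const _)).mul
        ((measurable_const.sub measurable_id).pow_const _))
    have heq : (fun s => PsiH H t u s) = fun s =>
        ((Real.sin (π * (H - 1 / 2)) / π) * s ^ (1/2 - H) * (u - s) ^ (1/2 - H)) * F s := rfl
    rw [heq]
    exact (hpre.mul hFmeas.measurable).aestronglyMeasurable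
  -- dominating function for the inner integral
  have hgint : IntegrableOn (fun z : ℝ => t ^ e * (z - u) ^ (e - 1)) (Set.Ioc u t) volume := by
    have h0 : IntervalIntegrable (fun x : ℝ => x ^ (e - 1)) volume 0 (t - u) :=
      intervalIntegral.intervalIntegrable_rpow' (by linarith)
    have h1 : IntervalIntegrable (fun x : ℝ => (x - u) ^ (e - 1)) volume (0 + u) ((t - u) + u) :=
      h0.comp_sub_right u
    simp only [zero_add, sub_add_cancel] at h1
    exact h1.1.const_mul _
  set C : ℝ := ∫ z in Set.Ioc u t, t ^ e * (z - u) ^ (e - 1) with hC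
  have hC0 : 0 ≤ C := by
    apply setIntegral_nonneg measurableSet_Ioc
    intro z hz
    exact mul_nonneg (Real.rpow_nonneg (by linarith [hz.1]) e)
      (Real.rpow_nonneg (by linarith [hz.1]) (e - 1))
  -- uniform bound on F for s ∈ (0, u)
  have hFbound : ∀ s ∈ Set.Ioo (0:ℝ) u, |F s| ≤ C := by
    intro s hs
    have hint := part1 s hs.2
    calc |F s| = ‖F s‖ := (Real.norm_eq_abs _).symm
      _ ≤ ∫ z in Set.Ioc u t, ‖z ^ e * (z - u) ^ e / (z - s)‖ :=
          norm_integral_le_integral_norm _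
      _ ≤ C := by
          apply setIntegral_mono_on hint.norm hgint measurableSet_Ioc
          intro z hz
          have hz1 : u < z := hz.1
          have hz2 : z ≤ t := hz.2
          have hzpos : 0 < z := lt_trans hu hz1
          have hzu : 0 < z - u := by linarith
          have hzs : 0 < z - s := by linarith [hs.2]
          have hnn : 0 ≤ z ^ e * (z - u) ^ e / (z - s) :=
            div_nonneg (mul_nonneg (Real.rpow_nonneg hzpos.le e)
              (Real.rpow_nonneg hzu.le e)) hzs.le
          rw [Real.norm_eq_abs, abs_of_nonneg hnn]
          have h1 : z ^ e ≤ t ^ e := Real.rpow_le_rpow hzpos.le hz2 he0.le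
          have h2 : (z - u) ^ e / (z - s) ≤ (z - u) ^ (e - 1) := by
            have hrw : (z - u) ^ (e - 1) = (z - u) ^ e / (z - u) := by
              rw [Real.rpow_sub hzu e 1, Real.rpow_one]
            rw [hrw]
            apply div_le_div_of_nonneg_left (Real.rpow_nonneg hzu.le e) hzu
            linarith [hs.2]
          calc z ^ e * (z - u) ^ e / (z - s)
              = z ^ e * ((z - u) ^ e / (z - s)) := by ring
            _ ≤ t ^ e * (z - u) ^ (e - 1) := by
                apply mul_le_mul h1 h2 _ (Real.rpow_nonneg (by linarith) e)
                exact div_nonneg (Real.rpow_nonneg hzu.le e) hzs.le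
  -- the L² dominating function
  set c0 : ℝ := |Real.sin (π * (H - 1 / 2)) / π| * C with hc0
  have hc00 : 0 ≤ c0 := mul_nonneg (abs_nonneg _) hC0
  set g : ℝ → ℝ := fun s => c0 * (s ^ (1/2 - H) * (u - s) ^ (1/2 - H)) with hg
  -- g is in L²
  have hgmeas : Measurable g :=
    measurable_const.mul ((measurable_id.pow_const _).mul
      ((measurable_const.sub measurable_id).pow_const _))
  have hgL2 : MemLp g 2 (volume.restrict (Set.Ioc 0 u)) := by
    rw [memLp_two_iff_integrable_sq hgmeas.aestronglyMeasurable]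
    have hb1 : (-1:ℝ) < (1/2 - H) * 2 := by linarith
    have hb0 : (1/2 - H) * 2 < 0 := by linarith
    have hbeta := (beta_type_integrable hb1 hb0 hu).const_mul (c0 ^ 2)
    refine hbeta.congr ?_
    rw [Filter.EventuallyEq, ae_restrict_iff' measurableSet_Ioc]
    filter_upwards with s hs
    have hs0 : (0:ℝ) ≤ s := hs.1.le
    have hus : (0:ℝ) ≤ u - s := by linarith [hs.2]
    have hsq : ∀ x : ℝ, 0 ≤ x → (x ^ (1/2 - H)) ^ 2 = x ^ ((1/2 - H) * 2) := by
      intro x hx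
      rw [← Real.rpow_natCast (x ^ (1/2 - H)) 2, ← Real.rpow_mul hx]
      norm_num
    show c0 ^ 2 * (s ^ ((1/2 - H) * 2) * (u - s) ^ ((1/2 - H) * 2)) = g s ^ 2
    have hexp : g s ^ 2 = c0 ^ 2 * ((s ^ (1/2 - H)) ^ 2 * ((u - s) ^ (1/2 - H)) ^ 2) := by
      simp only [hg]; ring
    rw [hexp, hsq s hs0, hsq (u - s) hus]
  -- PsiH is dominated by g
  refine MemLp.of_le hgL2 hPsimeas ?_
  rw [ae_restrict_iff' measurableSet_Ioc]
  filter_upwards with s hs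
  rcases hs with ⟨hs0, hsu⟩
  rcases eq_or_lt_of_le hsu with heq | hlt
  · -- s = u : PsiH = 0
    have h0 : (u - s) ^ (1/2 - H) = 0 := by
      rw [heq, sub_self]
      exact Real.zero_rpow (ne_of_lt (show 1/2 - H < 0 by linarith))
    have : PsiH H t u s = 0 := by
      simp only [PsiH, h0]
      ring
    rw [this, norm_zero]
    exact norm_nonneg _
  · -- s ∈ (0, u)
    have hsr : 0 ≤ s ^ (1/2 - H) := Real.rpow_nonneg hs0.le _
    have husr : 0 ≤ (u - s) ^ (1/2 - H) := Real.rpow_nonneg (by linarith) _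
    have hFb := hFbound s ⟨hs0, hlt⟩
    have key : |PsiH H t u s| ≤ g s := by
      have : PsiH H t u s =
          (Real.sin (π * (H - 1 / 2)) / π) * (s ^ (1/2 - H) * (u - s) ^ (1/2 - H)) * F s := by
        simp only [PsiH, hF, he]; ring
      rw [this]
      rw [abs_mul, abs_mul]
      have h1 : |s ^ (1/2 - H) * (u - s) ^ (1/2 - H)| = s ^ (1/2 - H) * (u - s) ^ (1/2 - H) :=
        abs_of_nonneg (mul_nonneg hsr husr)
      rw [h1]
      simp only [hg, hc0]
      calc |Real.sin (π * (H - 1 / 2)) / π| * (s ^ (1/2 - H) * (u - s) ^ (1/2 - H)) * |F s|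
          ≤ |Real.sin (π * (H - 1 / 2)) / π| * (s ^ (1/2 - H) * (u - s) ^ (1/2 - H)) * C := by
            apply mul_le_mul_of_nonneg_left hFb
            exact mul_nonneg (abs_nonneg _) (mul_nonneg hsr husr)
        _ = |Real.sin (π * (H - 1 / 2)) / π| * C * (s ^ (1/2 - H) * (u - s) ^ (1/2 - H)) := by
            ring
    calc ‖PsiH H t u s‖ = |PsiH H t u s| := rfl
      _ ≤ g s := key
      _ ≤ ‖g s‖ := le_abs_self _
end
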